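/- Let a and b be linear operators on ℂ² satisfying ab + ba = 1, a² = 0, b² = 0, let φ₀ satisfy aφ₀ = 0 and Ψ₀ satisfy b*Ψ₀ = 0 with ⟨φ₀, Ψ₀⟩ = 1, set φ₁ := bφ₀, Ψ₁ := a*Ψ₀, and define S_φ f := ⟨φ₀,f⟩φ₀ + ⟨φ₁,f⟩φ₁ and S_Ψ f := ⟨Ψ₀,f⟩Ψ₀ + ⟨Ψ₁,f⟩Ψ₁. Then S_φ S_Ψ = S_Ψ S_φ = 1, i.e. S_φ = S_Ψ⁻¹. -/

import Mathlib

open Matrix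
open scoped InnerProductSpace ComplexOrder

noncomputable section

/-- Action of a 2×2 complex matrix (an operator) on a vector of ℂ². -/
def act (A : Matrix (Fin 2) (Fin 2) ℂ) (x : EuclideanSpace ℂ (Fin 2)) :
    EuclideanSpace ℂ (Fin 2) := WithLp.toLp 2 (A.mulVec x)

lemma act_adjoint (A : Matrix (Fin 2) (Fin 2) ℂ) (x y : EuclideanSpace ℂ (Fin 2)) :
    ⟪x, act A y⟫_ℂ = ⟪act Aᴴ x, y⟫_ℂ := by
  simp only [act, PiLp.inner_apply, RCLike.inner_apply, Matrix.mulVec, dotProduct,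
    Matrix.conjTranspose_apply, map_sum, _root_.map_mul, starRingEnd_apply, star_star,
    Finset.mul_sum, Finset.sum_mul]
  rw [Finset.sum_comm]
  congr 1; ext i; congr 1; ext j; ring

lemma act_mul (A B : Matrix (Fin 2) (Fin 2) ℂ) (x : EuclideanSpace ℂ (Fin 2)) :
    act (A * B) x = act A (act B x) := by
  simp only [act, WithLp.ofLp_toLp, Matrix.mulVec_mulVec]

lemma act_act_eq (A B : Matrix (Fin 2) (Fin 2) ℂ) (x : EuclideanSpace ℂ (Fin 2)) :
    act A (act B x) = act (A * B) x := (act_mul A B x).symm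

/-- `S_φ S_Ψ = S_Ψ S_φ = 1`, i.e. `S_φ = S_Ψ⁻¹`. -/
theorem stmt7 (a b Sφ SΨ : Matrix (Fin 2) (Fin 2) ℂ)
    (hab : a * b + b * a = 1) (ha2 : a * a = 0) (hb2 : b * b = 0)
    (φ₀ Ψ₀ : EuclideanSpace ℂ (Fin 2))
    (hvacφ : act a φ₀ = 0) (hvacΨ : act bᴴ Ψ₀ = 0)
    (hnorm : ⟪φ₀, Ψ₀⟫_ℂ = 1)
    (hSφ : ∀ f, act Sφ f = ⟪φ₀, f⟫_ℂ • φ₀ + ⟪act b φ₀, f⟫_ℂ • act b φ₀)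
    (hSΨ : ∀ f, act SΨ f = ⟪Ψ₀, f⟫_ℂ • Ψ₀ + ⟪act aᴴ Ψ₀, f⟫_ℂ • act aᴴ Ψ₀) :
    Sφ * SΨ = 1 ∧ SΨ * Sφ = 1 ∧ Sφ = SΨ⁻¹ := by
  set φ₁ : EuclideanSpace ℂ (Fin 2) := act b φ₀ with hφ₁
  set Ψ₁ : EuclideanSpace ℂ (Fin 2) := act aᴴ Ψ₀ with hΨ₁
  -- biorthogonality
  have i01 : ⟪φ₀, Ψ₁⟫_ℂ = 0 := by
    rw [hΨ₁, act_adjoint, Matrix.conjTranspose_conjTranspose, hvacφ, inner_zero_left]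
  have i10 : ⟪φ₁, Ψ₀⟫_ℂ = 0 := by
    rw [← inner_conj_symm, act_adjoint, hvacΨ, inner_zero_left, map_zero]
  have i11 : ⟪φ₁, Ψ₁⟫_ℂ = 1 := by
    have h1 : ⟪φ₁, Ψ₁⟫_ℂ = ⟪act (a * b) φ₀, Ψ₀⟫_ℂ := by
      rw [hΨ₁, act_adjoint, Matrix.conjTranspose_conjTranspose, hφ₁, act_act_eq]
    have h2 : act (a * b) φ₀ = φ₀ - act (b * a) φ₀ := by
      have h : a * b = 1 - b * a := eq_sub_of_add_eq hab
      rw [h]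
      simp only [act, Matrix.sub_mulVec, Matrix.one_mulVec, WithLp.toLp_sub, WithLp.toLp_ofLp]
    have h3 : act (b * a) φ₀ = 0 := by rw [act_mul, hvacφ]; simp [act]
    rw [h1, h2, h3, sub_zero, hnorm]
  have j00 : ⟪Ψ₀, φ₀⟫_ℂ = 1 := by rw [← inner_conj_symm, hnorm]; simp
  have j01 : ⟪Ψ₀, φ₁⟫_ℂ = 0 := by rw [← inner_conj_symm, i10]; simp
  have j10 : ⟪Ψ₁, φ₀⟫_ℂ = 0 := by rw [← inner_conj_symm, i01]; simp
  have j11 : ⟪Ψ₁, φ₁⟫_ℂ = 1 := by rw [← inner_conj_symm, i11]; simp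
  -- product acts as  f ↦ ⟪Ψ₀,f⟫ φ₀ + ⟪Ψ₁,f⟫ φ₁
  have hM : ∀ f, act (Sφ * SΨ) f = ⟪Ψ₀, f⟫_ℂ • φ₀ + ⟪Ψ₁, f⟫_ℂ • φ₁ := by
    intro f
    rw [act_mul, hSΨ f, hSφ]
    rw [inner_add_right, inner_add_right, inner_smul_right, inner_smul_right,
      inner_smul_right, inner_smul_right, hnorm, i01, i10, i11]
    ring_nf
  have hMφ₀ : act (Sφ * SΨ) φ₀ = φ₀ := by rw [hM, j00, j10]; simp
  have hMφ₁ : act (Sφ * SΨ) φ₁ = φ₁ := by rw [hM, j01, j11]; simp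
  -- φ₀, φ₁ linearly independent
  have hli : LinearIndependent ℂ ![φ₀, φ₁] := by
    rw [LinearIndependent.pair_iff]
    intro s t hst
    have h0 : ⟪Ψ₀, s • φ₀ + t • φ₁⟫_ℂ = 0 := by rw [hst, inner_zero_right]
    have h1 : ⟪Ψ₁, s • φ₀ + t • φ₁⟫_ℂ = 0 := by rw [hst, inner_zero_right]
    rw [inner_add_right, inner_smul_right, inner_smul_right, j00, j01] at h0
    rw [inner_add_right, inner_smul_right, inner_smul_right, j10, j11] at h1
    simp at h0 h1
    exact ⟨h0, h1⟩
  have hcard : Fintype.card (Fin 2) = Module.finrank ℂ (EuclideanSpace ℂ (Fin 2)) := by simp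
  let B : Module.Basis (Fin 2) ℂ (EuclideanSpace ℂ (Fin 2)) :=
    basisOfLinearIndependentOfCardEqFinrank hli hcard
  have hB : ∀ i, B i = ![φ₀, φ₁] i := fun i => by
    simp [B, coe_basisOfLinearIndependentOfCardEqFinrank]
  -- the product is the identity matrix
  have hlin : Matrix.toEuclideanLin (Sφ * SΨ) = LinearMap.id := by
    apply Module.Basis.ext B
    intro i
    have key : ∀ v : EuclideanSpace ℂ (Fin 2), act (Sφ * SΨ) v = v →
        Matrix.toEuclideanLin (Sφ * SΨ) v =
          (LinearMap.id : EuclideanSpace ℂ (Fin 2) →ₗ[ℂ] EuclideanSpace ℂ (Fin 2)) v :=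
      fun v hv => hv
    fin_cases i
    · exact (hB 0).symm ▸ key φ₀ hMφ₀
    · exact (hB 1).symm ▸ key φ₁ hMφ₁
  have hmv : ∀ x : Fin 2 → ℂ, (Sφ * SΨ).mulVec x = x := fun x => congrArg WithLp.ofLp (LinearMap.congr_fun hlin (WithLp.toLp 2 x))
  have hone : Sφ * SΨ = 1 := by
    ext i j
    have h := congrFun (hmv (Pi.single j 1)) i
    simpa [Matrix.mulVec_single, Matrix.one_apply, Pi.single_apply, eq_comm] using h
  have hone' : SΨ * Sφ = 1 := mul_eq_one_comm.mp hone
  exact ⟨hone, hone', (Matrix.inv_eq_right_inv hone').symm⟩
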